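/- Let r be a transitive counterfactual relation. If r t t' holds and S' ∈ apv(t'), then either apv(t) is empty, or there exists S ∈ apv(t) with S ⊆ S'. -/
import Mathlib

theorem stmt3 {T P : Type*} (sat : T → Prop) (cor : T → Finset P)
    (r : T → T → Prop) (htrans : ∀ a b c, r a b → r b c → r a c)
    (apv : T → Set (Finset P))
    (happv : ∀ t, apv t = {S | ¬ sat t ∧ (∃ t', r t t' ∧ cor t' = S ∧ ¬ sat t') ∧
      ¬ ∃ t'', r t t'' ∧ cor t'' ⊂ S ∧ ¬ sat t''})
    (t t' : T) (S' : Finset P) (hr : r t t') (hS' : S' ∈ apv t') :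
    apv t = ∅ ∨ ∃ S ∈ apv t, S ⊆ S' := by
  rw [happv t'] at hS'
  obtain ⟨hnsat', ⟨u, hru, hcu, hnsu⟩, _⟩ := hS'
  by_cases hsat : sat t
  · left
    rw [happv t]
    ext S
    simp only [Set.mem_setOf_eq, Set.mem_empty_iff_false, iff_false]
    rintro ⟨h, -⟩
    exact h hsat
  · right
    set A : Set (Finset P) := {S | S ⊆ S' ∧ ∃ v, r t v ∧ cor v = S ∧ ¬ sat v} with hA
    have hne : A.Nonempty := ⟨S', le_refl S', u, htrans _ _ _ hr hru, hcu, hnsu⟩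
    obtain ⟨S, ⟨hSsub, v, hrv, hcv, hnsv⟩, hmin⟩ :=
      (wellFounded_lt (α := Finset P)).has_min A hne
    refine ⟨S, ?_, hSsub⟩
    rw [happv t]
    refine ⟨hsat, ⟨v, hrv, hcv, hnsv⟩, ?_⟩
    rintro ⟨w, hrw, hsub, hnsw⟩
    exact hmin (cor w) ⟨hsub.subset.trans hSsub, w, hrw, rfl, hnsw⟩ hsub
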